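/- Let X be a Banach sequence space over a countably infinite index set I in which the canonical unit vectors (e_i)_{i∈I} form an OP-basis, let integers 1 ≤ r₁ < r₂ < ⋯ < r_N (N ≥ 2) be given, and for each 1 ≤ l ≤ N let T_l = T_{b^{(l)},φ_l} : X → X be a weighted pseudo-shift with weight sequence b^{(l)} = (b_i^{(l)})_{i∈I} of nonzero scalars and injective map φ_l : I → I. Suppose there exists a strictly increasing sequence (n_k)_{k≥1} of positive integers such that: (H1) for all i, j ∈ I and all 1 ≤ l, s ≤ N, ‖(∏_{v=0}^{r_l n_k−1} b^{(l)}_{φ_l^v(i)})^{−1} e_{φ_l^{r_l n_k}(i)}‖ · ‖(∏_{v=1}^{r_s n_k} b^{(s)}_{ψ_s^v(j)}) e_{ψ_s^{r_s n_k}(j)}‖ → 0 as k → ∞; and (H2) for every i ∈ I and all 1 ≤ s < l ≤ N, ‖(∏_{v=0}^{r_s n_k−1} b^{(s)}_{φ_s^v(i)})^{−1} (∏_{v=1}^{r_l n_k} b^{(l)}_{ψ_l^v(φ_s^{r_s n_k}(i))}) e_{ψ_l^{r_l n_k}(φ_s^{r_s n_k}(i))}‖ → 0 and ‖(∏_{v=0}^{r_l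 n_k−1} b^{(l)}_{φ_l^v(i)})^{−1} (∏_{v=1}^{r_s n_k} b^{(s)}_{ψ_s^v(φ_l^{r_l n_k}(i))}) e_{ψ_s^{r_s n_k}(φ_l^{r_l n_k}(i))}‖ → 0 as k → ∞. Then T₁^{r₁}, T₂^{r₂}, …, T_N^{r_N} satisfy the d-Supercyclicity Criterion (with respect to (n_k)). -/
import Mathlib


open Filter Topology
open scoped Classical

/-- The vector `(∏_{v=1}^{n} b_{ψ^v(i)}) • e_{ψ^n(i)}`, where `ψ` is the partial inverse of the
injective map `φ`, with the convention that the whole term is `0` when `ψ^n(i)` is undefined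
(i.e. when `i ∉ φ^n(I)`). -/
noncomputable def backVec {I X : Type*} [AddCommGroup X] [Module ℂ X]
    (φ : I → I) (b : I → ℂ) (e : I → X) (n : ℕ) (i : I) : X :=
  if h : ∃ j, φ^[n] j = i then
    (∏ v ∈ Finset.range n, b (φ^[v] (Classical.choose h))) • e (Classical.choose h)
  else 0

/-- Continuous linear operators `T 0, …, T (N-1)` on `X` satisfy the d-Supercyclicity Criterion
with respect to the strictly increasing sequence `(n k)` of positive integers. -/
def DSupCriterionWrt {X : Type*} [NormedAddCommGroup X] [NormedSpace ℂ X]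
    {N : ℕ} (T : Fin N → X →L[ℂ] X) (n : ℕ → ℕ) : Prop :=
  ∃ (X₀ : Set X) (Xs : Fin N → Set X) (S : Fin N → ℕ → X → X),
    Dense X₀ ∧ (∀ l, Dense (Xs l)) ∧
    (∀ l i : Fin N, ∀ x ∈ Xs i,
      Tendsto (fun k => ((T l) ^ (n k)) (S i k x) - (if i = l then x else 0)) atTop (𝓝 0)) ∧
    (∀ l : Fin N, ∀ x ∈ X₀, ∀ y : Fin N → X, (∀ j, y j ∈ Xs j) →
      Tendsto (fun k => ‖((T l) ^ (n k)) x‖ * ‖∑ j : Fin N, S j k (y j)‖) atTop (𝓝 0))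

theorem stmt4
    {X : Type*} [NormedAddCommGroup X] [NormedSpace ℂ X] [CompleteSpace X]
    [TopologicalSpace.SeparableSpace X] (hinfdim : ¬ FiniteDimensional ℂ X)
    {I : Type*} [Countable I] [Infinite I]
    (J : X →L[ℂ] (I → ℂ)) (hJ : Function.Injective J)
    (e : I → X) (he : ∀ i j : I, J (e i) j = if j = i then 1 else 0)
    (f : I → X →L[ℂ] ℂ) (hf : ∀ (i : I) (x : X), f i x = J x i)
    (hdense : Dense (Submodule.span ℂ (Set.range e) : Set X))
    (hOP : ∃ C : ℝ, ∀ i : I, ‖e i‖ * ‖f i‖ ≤ C)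
    {N : ℕ} (hN : 2 ≤ N)
    (r : Fin N → ℕ) (hr1 : ∀ l, 1 ≤ r l) (hr : StrictMono r)
    (b : Fin N → I → ℂ) (hb : ∀ l i, b l i ≠ 0)
    (φ : Fin N → I → I) (hφ : ∀ l, Function.Injective (φ l))
    (T : Fin N → X →L[ℂ] X)
    (hT : ∀ (l : Fin N) (x : X) (i : I), J (T l x) i = b l i * J x (φ l i))
    (n : ℕ → ℕ) (hn : StrictMono n) (hn1 : ∀ k, 1 ≤ n k)
    (hH1 : ∀ i j : I, ∀ l s : Fin N,
      Tendsto (fun k => ‖(∏ v ∈ Finset.range (r l * n k), b l ((φ l)^[v] i))⁻¹ •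
            e ((φ l)^[r l * n k] i)‖ *
          ‖backVec (φ s) (b s) e (r s * n k) j‖) atTop (𝓝 0))
    (hH2 : ∀ i : I, ∀ s l : Fin N, s < l →
      Tendsto (fun k => ‖(∏ v ∈ Finset.range (r s * n k), b s ((φ s)^[v] i))⁻¹ •
          backVec (φ l) (b l) e (r l * n k) ((φ s)^[r s * n k] i)‖) atTop (𝓝 0) ∧
      Tendsto (fun k => ‖(∏ v ∈ Finset.range (r l * n k), b l ((φ l)^[v] i))⁻¹ •
          backVec (φ s) (b s) e (r s * n k) ((φ l)^[r l * n k] i)‖) atTop (𝓝 0)) :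
    DSupCriterionWrt (fun l : Fin N => (T l) ^ (r l)) n := by
  classical
  have hφm : ∀ (l : Fin N) (m : ℕ), Function.Injective ((φ l)^[m]) :=
    fun l m => Function.Injective.iterate (hφ l) m
  -- coordinate formula for powers
  have coord : ∀ (l : Fin N) (m : ℕ) (x : X) (i : I),
      J (((T l) ^ m) x) i
        = (∏ v ∈ Finset.range m, b l ((φ l)^[v] i)) * J x ((φ l)^[m] i) := by
    intro l m
    induction m with
    | zero => intro x i; simp
    | succ m ih =>
      intro x i
      rw [pow_succ, ContinuousLinearMap.mul_apply, ih, hT, Finset.prod_range_succ,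
        Function.iterate_succ_apply']
      ring
  have prodne : ∀ (l : Fin N) (m : ℕ) (j : I),
      (∏ v ∈ Finset.range m, b l ((φ l)^[v] j)) ≠ 0 :=
    fun l m j => Finset.prod_ne_zero_iff.mpr fun v _ => hb l _
  -- T^m on basis vectors is the back vector
  have TpowE : ∀ (l : Fin N) (m : ℕ) (j : I),
      ((T l) ^ m) (e j) = backVec (φ l) (b l) e m j := by
    intro l m j
    apply hJ
    funext q
    rw [coord]
    unfold backVec
    by_cases h : ∃ p, (φ l)^[m] p = j
    · rw [dif_pos h]
      have hps : (φ l)^[m] (Classical.choose h) = j := Classical.choose_spec h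
      by_cases hq : q = Classical.choose h
      · simp [hq, hps, he, map_smul]
      · have hne : ¬ ((φ l)^[m] q = j) := fun hc => hq (hφm l m (hc.trans hps.symm))
        simp [hne, he, hq, map_smul]
    · rw [dif_neg h]
      have hne : ¬ ((φ l)^[m] q = j) := fun hc => h ⟨q, hc⟩
      simp [hne, he]
  -- T^m on forward vectors gives back the basis vector
  have TpowFwd : ∀ (l : Fin N) (m : ℕ) (j : I),
      ((T l) ^ m) ((∏ v ∈ Finset.range m, b l ((φ l)^[v] j))⁻¹ • e ((φ l)^[m] j)) = e j := by
    intro l m j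
    rw [map_smul, TpowE]
    have h : ∃ p, (φ l)^[m] p = (φ l)^[m] j := ⟨j, rfl⟩
    unfold backVec
    rw [dif_pos h]
    have hc : Classical.choose h = j := hφm l m (Classical.choose_spec h)
    rw [hc, smul_smul, inv_mul_cancel₀ (prodne l m j), one_smul]
  -- representation
  have hmem : ∀ x : X, x ∈ (Submodule.span ℂ (Set.range e) : Set X) →
      ∃ a : I →₀ ℂ, (Finsupp.linearCombination ℂ e) a = x := by
    intro x hx
    rw [← Finsupp.range_linearCombination] at hx
    exact hx
  set rep : X → (I →₀ ℂ) := fun x =>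
    if h : ∃ a : I →₀ ℂ, (Finsupp.linearCombination ℂ e) a = x then Classical.choose h else 0
    with hrepdef
  have hrep : ∀ x ∈ (Submodule.span ℂ (Set.range e) : Set X),
      (∑ i ∈ (rep x).support, rep x i • e i) = x := by
    intro x hx
    have h := hmem x hx
    have h2 : (Finsupp.linearCombination ℂ e) (rep x) = x := by
      simp only [hrepdef, dif_pos h]
      exact Classical.choose_spec h
    rw [Finsupp.linearCombination_apply, Finsupp.sum] at h2
    exact h2
  refine ⟨(Submodule.span ℂ (Set.range e) : Set X),
    fun _ => (Submodule.span ℂ (Set.range e) : Set X),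
    fun l k x => ∑ i ∈ (rep x).support, rep x i •
      ((∏ v ∈ Finset.range (r l * n k), b l ((φ l)^[v] i))⁻¹ • e ((φ l)^[r l * n k] i)),
    hdense, fun _ => hdense, ?_, ?_⟩
  · intro l i x hx
    by_cases hil : i = l
    · subst hil
      have key : ∀ k, (((T i) ^ (r i)) ^ (n k))
          (∑ p ∈ (rep x).support, rep x p •
            ((∏ v ∈ Finset.range (r i * n k), b i ((φ i)^[v] p))⁻¹ •
              e ((φ i)^[r i * n k] p))) = x := by
        intro k
        rw [← pow_mul, map_sum]
        simp only [map_smul, TpowFwd]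
        exact hrep x hx
      have h0 : Tendsto (fun _ : ℕ => (0 : X)) atTop (𝓝 0) := tendsto_const_nhds
      refine h0.congr fun k => ?_
      rw [if_pos rfl]
      exact (sub_eq_zero_of_eq (key k)).symm
    · have key : ∀ k, (((T l) ^ (r l)) ^ (n k))
          (∑ p ∈ (rep x).support, rep x p •
            ((∏ v ∈ Finset.range (r i * n k), b i ((φ i)^[v] p))⁻¹ •
              e ((φ i)^[r i * n k] p)))
          = ∑ p ∈ (rep x).support, rep x p •
            ((∏ v ∈ Finset.range (r i * n k), b i ((φ i)^[v] p))⁻¹ •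
              backVec (φ l) (b l) e (r l * n k) ((φ i)^[r i * n k] p)) := by
        intro k
        rw [← pow_mul, map_sum]
        simp only [map_smul, TpowE]
      have hterm : ∀ p ∈ (rep x).support,
          Tendsto (fun k => rep x p •
            ((∏ v ∈ Finset.range (r i * n k), b i ((φ i)^[v] p))⁻¹ •
              backVec (φ l) (b l) e (r l * n k) ((φ i)^[r i * n k] p))) atTop (𝓝 0) := by
        intro p _
        have hv : Tendsto (fun k =>
            (∏ v ∈ Finset.range (r i * n k), b i ((φ i)^[v] p))⁻¹ •
              backVec (φ l) (b l) e (r l * n k) ((φ i)^[r i * n k] p)) atTop (𝓝 0) := by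
          rcases lt_or_gt_of_ne hil with hlt | hgt
          · exact tendsto_zero_iff_norm_tendsto_zero.mpr (hH2 p i l hlt).1
          · exact tendsto_zero_iff_norm_tendsto_zero.mpr (hH2 p l i hgt).2
        simpa using hv.const_smul (rep x p)
      have hsum : Tendsto (fun k => ∑ p ∈ (rep x).support, rep x p •
            ((∏ v ∈ Finset.range (r i * n k), b i ((φ i)^[v] p))⁻¹ •
              backVec (φ l) (b l) e (r l * n k) ((φ i)^[r i * n k] p))) atTop (𝓝 0) := by
        simpa using tendsto_finset_sum ((rep x).support) hterm
      refine hsum.congr fun k => ?_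
      rw [if_neg hil, sub_zero]
      exact (key k).symm
  · intro l x hx y hy
    set a := rep x with ha
    have hbound1 : ∀ k, ‖(((T l) ^ (r l)) ^ (n k)) x‖ ≤
        ∑ i ∈ a.support, ‖a i‖ * ‖backVec (φ l) (b l) e (r l * n k) i‖ := by
      intro k
      rw [← hrep x hx, ← pow_mul, map_sum]
      simp only [map_smul, TpowE]
      refine (norm_sum_le _ _).trans ?_
      refine Finset.sum_le_sum fun i _ => ?_
      rw [norm_smul]
    have hbound2 : ∀ k, ‖∑ j : Fin N, ∑ p ∈ (rep (y j)).support, rep (y j) p •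
          ((∏ v ∈ Finset.range (r j * n k), b j ((φ j)^[v] p))⁻¹ •
            e ((φ j)^[r j * n k] p))‖ ≤
        ∑ j : Fin N, ∑ p ∈ (rep (y j)).support, ‖rep (y j) p‖ *
          ‖(∏ v ∈ Finset.range (r j * n k), b j ((φ j)^[v] p))⁻¹ •
            e ((φ j)^[r j * n k] p)‖ := by
      intro k
      refine (norm_sum_le _ _).trans ?_
      refine Finset.sum_le_sum fun j _ => ?_
      refine (norm_sum_le _ _).trans ?_
      refine Finset.sum_le_sum fun p _ => ?_
      rw [norm_smul]
    have hAB : Tendsto (fun k =>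
        (∑ i ∈ a.support, ‖a i‖ * ‖backVec (φ l) (b l) e (r l * n k) i‖) *
        (∑ j : Fin N, ∑ p ∈ (rep (y j)).support, ‖rep (y j) p‖ *
          ‖(∏ v ∈ Finset.range (r j * n k), b j ((φ j)^[v] p))⁻¹ •
            e ((φ j)^[r j * n k] p)‖)) atTop (𝓝 0) := by
      have hexp : ∀ k,
          (∑ i ∈ a.support, ‖a i‖ * ‖backVec (φ l) (b l) e (r l * n k) i‖) *
          (∑ j : Fin N, ∑ p ∈ (rep (y j)).support, ‖rep (y j) p‖ *
            ‖(∏ v ∈ Finset.range (r j * n k), b j ((φ j)^[v] p))⁻¹ •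
              e ((φ j)^[r j * n k] p)‖)
          = ∑ i ∈ a.support, ∑ j : Fin N, ∑ p ∈ (rep (y j)).support,
            (‖a i‖ * ‖rep (y j) p‖) *
            (‖(∏ v ∈ Finset.range (r j * n k), b j ((φ j)^[v] p))⁻¹ •
              e ((φ j)^[r j * n k] p)‖ * ‖backVec (φ l) (b l) e (r l * n k) i‖) := by
        intro k
        rw [Finset.sum_mul]
        refine Finset.sum_congr rfl fun i _ => ?_
        rw [Finset.mul_sum]
        refine Finset.sum_congr rfl fun j _ => ?_
        rw [Finset.mul_sum]
        refine Finset.sum_congr rfl fun p _ => ?_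
        ring
      simp only [hexp]
      have hs := tendsto_finset_sum a.support fun i (_ : i ∈ a.support) =>
        tendsto_finset_sum Finset.univ fun (j : Fin N) (_ : j ∈ Finset.univ) =>
        tendsto_finset_sum ((rep (y j)).support) fun p (_ : p ∈ (rep (y j)).support) =>
          (show Tendsto (fun k => (‖a i‖ * ‖rep (y j) p‖) *
            (‖(∏ v ∈ Finset.range (r j * n k), b j ((φ j)^[v] p))⁻¹ •
              e ((φ j)^[r j * n k] p)‖ * ‖backVec (φ l) (b l) e (r l * n k) i‖))
            atTop (𝓝 0) by
              simpa using (hH1 p i j l).const_mul (‖a i‖ * ‖rep (y j) p‖))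
      simpa using hs
    refine squeeze_zero (fun k => mul_nonneg (norm_nonneg _) (norm_nonneg _))
      (fun k => ?_) hAB
    refine mul_le_mul (hbound1 k) (hbound2 k) (norm_nonneg _) ?_
    exact Finset.sum_nonneg fun i _ => mul_nonneg (norm_nonneg _) (norm_nonneg _)
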